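/- arXiv:2312.03386 — 3 statements merged into one kernel-verified Lean document; each statement's English description precedes it below -/
import Mathlib

section
/- For the square activation σ(x) = x², define for inputs x, y ∈ ℝ^{d} the matrix Σ(x,y) ∈ ℝ^{(1+d)×(1+d)} with block form Σ(x,y)_{00} = 2⟨x,y⟩² + ‖x‖²‖y‖², Σ(x,y)_{α0} = 4⟨x,y⟩ y_{α-1} + 2 x_{α-1}‖y‖², Σ(x,y)_{0β} = 4⟨x,y⟩ x_{β-1} + 2 y_{β-1}‖x‖², and Σ(x,y)_{αβ} = 4 x_{β-1} y_{α-1} + 4 x_{α-1} y_{β-1} + 4⟨x,y⟩·1[α=β]. Then for any N data points x^{(1)},…,x^{(N)} ∈ ℝ^{d}, none of which is the zero vector, the N(d+1) × N(d+1) block Gram matrix with (i,j) block Σ(x^{(i)}, x^{(j)}) has rank at most N(d+1) − 2N + 1. -/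
open scoped BigOperators

/-- The `(1+d) × (1+d)` block `Σ(x,y)` of the NNGP kernel of a shallow network with square
activation `σ(t) = t²`:
`Σ(x,y)₀₀ = 2⟨x,y⟩² + ‖x‖²‖y‖²`, `Σ(x,y)_{α0} = 4⟨x,y⟩ y_{α-1} + 2 x_{α-1}‖y‖²`,
`Σ(x,y)_{0β} = 4⟨x,y⟩ x_{β-1} + 2 y_{β-1}‖x‖²`, and
`Σ(x,y)_{αβ} = 4 x_{β-1} y_{α-1} + 4 x_{α-1} y_{β-1} + 4⟨x,y⟩·1[α=β]`. -/
noncomputable def squareSigma {d : ℕ} (x y : Fin d → ℝ) :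
    Fin (d + 1) → Fin (d + 1) → ℝ := fun a b =>
  Fin.cases
    (Fin.cases
      (2 * (∑ i, x i * y i) ^ 2 + (∑ i, x i ^ 2) * (∑ i, y i ^ 2))
      (fun β => 4 * (∑ i, x i * y i) * x β + 2 * y β * (∑ i, x i ^ 2)) b)
    (fun α =>
      Fin.cases
        (4 * (∑ i, x i * y i) * y α + 2 * x α * (∑ i, y i ^ 2))
        (fun β => 4 * x β * y α + 4 * x α * y β
            + 4 * (∑ i, x i * y i) * (if α = β then 1 else 0)) b) a

lemma keyV {d : ℕ} (y z : Fin d → ℝ) (a : Fin (d + 1)) :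
    ∑ b, squareSigma y z a b * (Fin.cases (-2 : ℝ) z b) = 0 := by
  induction a using Fin.cases with
  | zero =>
    simp only [squareSigma, Fin.sum_univ_succ, Fin.cases_zero, Fin.cases_succ]
    have h : ∀ β : Fin d,
        (4 * (∑ i, y i * z i) * y β + 2 * z β * ∑ i, y i ^ 2) * z β
          = 4 * (∑ i, y i * z i) * (y β * z β) + 2 * (∑ i, y i ^ 2) * (z β ^ 2) := by
      intro β; ring
    rw [Finset.sum_congr rfl fun β _ => h β, Finset.sum_add_distrib,
      ← Finset.mul_sum, ← Finset.mul_sum]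
    ring
  | succ α =>
    simp only [squareSigma, Fin.sum_univ_succ, Fin.cases_zero, Fin.cases_succ]
    have h : ∀ β : Fin d,
        (4 * y β * z α + 4 * y α * z β + 4 * (∑ i, y i * z i) * (if α = β then 1 else 0)) * z β
          = 4 * z α * (y β * z β) + 4 * y α * (z β ^ 2)
            + (if α = β then 4 * (∑ i, y i * z i) * z β else 0) := by
      intro β; by_cases hb : α = β <;> simp [hb] <;> ring
    rw [Finset.sum_congr rfl fun β _ => h β, Finset.sum_add_distrib, Finset.sum_add_distrib,
      ← Finset.mul_sum, ← Finset.mul_sum, Finset.sum_ite_eq]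
    simp only [Finset.mem_univ, if_true]
    ring

lemma keyW {d : ℕ} (y z w : Fin d → ℝ) (a : Fin (d + 1)) :
    ∑ b, squareSigma y z a b * (Fin.cases (0 : ℝ) (fun β => -(w β)) b)
      + ∑ b, squareSigma y w a b * (Fin.cases (0 : ℝ) z b) = 0 := by
  induction a using Fin.cases with
  | zero =>
    simp only [squareSigma, Fin.sum_univ_succ, Fin.cases_zero, Fin.cases_succ]
    have h1 : ∀ β : Fin d,
        (4 * (∑ i, y i * z i) * y β + 2 * z β * ∑ i, y i ^ 2) * (-(w β))
          = (-(4 * (∑ i, y i * z i))) * (y β * w β)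
            + (-(2 * (∑ i, y i ^ 2))) * (z β * w β) := by
      intro β; ring
    have h2 : ∀ β : Fin d,
        (4 * (∑ i, y i * w i) * y β + 2 * w β * ∑ i, y i ^ 2) * z β
          = (4 * (∑ i, y i * w i)) * (y β * z β) + (2 * (∑ i, y i ^ 2)) * (z β * w β) := by
      intro β; ring
    rw [Finset.sum_congr rfl fun β _ => h1 β, Finset.sum_congr rfl fun β _ => h2 β,
      Finset.sum_add_distrib, Finset.sum_add_distrib, ← Finset.mul_sum, ← Finset.mul_sum,
      ← Finset.mul_sum, ← Finset.mul_sum]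
    ring
  | succ α =>
    simp only [squareSigma, Fin.sum_univ_succ, Fin.cases_zero, Fin.cases_succ]
    have h1 : ∀ β : Fin d,
        (4 * y β * z α + 4 * y α * z β + 4 * (∑ i, y i * z i) * (if α = β then 1 else 0))
            * (-(w β))
          = (-(4 * z α)) * (y β * w β) + (-(4 * y α)) * (z β * w β)
            + (if α = β then (-(4 * (∑ i, y i * z i))) * w β else 0) := by
      intro β; by_cases hb : α = β <;> simp [hb] <;> ring
    have h2 : ∀ β : Fin d,
        (4 * y β * w α + 4 * y α * w β + 4 * (∑ i, y i * w i) * (if α = β then 1 else 0)) * z β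
          = (4 * w α) * (y β * z β) + (4 * y α) * (z β * w β)
            + (if α = β then (4 * (∑ i, y i * w i)) * z β else 0) := by
      intro β; by_cases hb : α = β <;> simp [hb] <;> ring
    rw [Finset.sum_congr rfl fun β _ => h1 β, Finset.sum_congr rfl fun β _ => h2 β,
      Finset.sum_add_distrib, Finset.sum_add_distrib, Finset.sum_add_distrib,
      Finset.sum_add_distrib, ← Finset.mul_sum, ← Finset.mul_sum, ← Finset.mul_sum,
      ← Finset.mul_sum, Finset.sum_ite_eq, Finset.sum_ite_eq]
    simp only [Finset.mem_univ, if_true]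
    ring

/-- For any `N` nonzero data points `x⁽¹⁾, …, x⁽ᴺ⁾ ∈ ℝᵈ`, the `N(d+1) × N(d+1)` block Gram
matrix with `(i,j)` block `Σ(x⁽ⁱ⁾, x⁽ʲ⁾)` (square activation) has rank at most
`N(d+1) − 2N + 1`. -/
theorem squareSigma_gram_rank_le {N d : ℕ} (x : Fin N → Fin d → ℝ)
    (hx : ∀ i, x i ≠ 0) :
    Matrix.rank
        (Matrix.of fun p q : Fin N × Fin (d + 1) =>
          squareSigma (x p.1) (x q.1) p.2 q.2)
      ≤ N * (d + 1) - 2 * N + 1 := by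
  rcases Nat.eq_zero_or_pos N with hN | hN
  · subst hN
    have := Matrix.rank_le_card_height
      (Matrix.of fun p q : Fin 0 × Fin (d + 1) =>
        squareSigma (x p.1) (x q.1) p.2 q.2)
    simp at this
    omega
  rcases Nat.eq_zero_or_pos d with hd | hd
  · subst hd
    exact absurd (Subsingleton.elim (x ⟨0, hN⟩) 0) (hx ⟨0, hN⟩)
  haveI : NeZero N := ⟨hN.ne'⟩
  set M : Matrix (Fin N × Fin (d + 1)) (Fin N × Fin (d + 1)) ℝ :=
    Matrix.of fun p q : Fin N × Fin (d + 1) =>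
      squareSigma (x p.1) (x q.1) p.2 q.2 with hM
  -- the null vectors
  set u : (Fin N ⊕ {i : Fin N // i ≠ 0}) → (Fin N × Fin (d + 1)) → ℝ :=
    Sum.elim
      (fun i q => if q.1 = i then Fin.cases (-2 : ℝ) (x i) q.2 else 0)
      (fun i q => (if q.1 = 0 then Fin.cases (0 : ℝ) (fun β => -(x i.1 β)) q.2 else 0)
        + (if q.1 = i.1 then Fin.cases (0 : ℝ) (x 0) q.2 else 0)) with hu
  have hmem : ∀ c, u c ∈ LinearMap.ker M.mulVecLin := by
    rintro (i | i) <;>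
    · rw [LinearMap.mem_ker]
      funext p
      obtain ⟨p1, a⟩ := p
      simp only [hu, hM, Matrix.mulVecLin_apply, Matrix.mulVec,
        dotProduct, Fintype.sum_prod_type, Finset.sum_ite_irrel, Finset.sum_const_zero, Sum.elim_inl, Sum.elim_inr, Matrix.of_apply,
        mul_ite, mul_zero, mul_add, Finset.sum_add_distrib,
        Finset.sum_ite_eq', Finset.mem_univ, if_true, Pi.zero_apply]
      first
        | exact keyV (x p1) (x i) a
        | exact keyW (x p1) (x 0) (x i.1) a
  have hind : LinearIndependent ℝ u := by
    rw [Fintype.linearIndependent_iff]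
    intro g hg
    have hgl : ∀ i : Fin N, g (Sum.inl i) = 0 := by
      intro i
      have := congrFun hg (i, 0)
      simp only [hu, Finset.sum_apply, Pi.smul_apply, Fintype.sum_sum_type,
        Sum.elim_inl, Sum.elim_inr, Fin.cases_zero, smul_eq_mul, mul_ite, mul_zero,
        Finset.sum_ite_eq', Finset.sum_ite_eq, Finset.mem_univ, if_true, Pi.zero_apply,
        add_zero, ite_self, Finset.sum_const_zero, mul_neg] at this
      -- this : g (Sum.inl i) * (-2) + 0 = 0  (hopefully)
      linarith
    intro c
    match c with
    | Sum.inl i => exact hgl i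
    | Sum.inr i =>
      obtain ⟨α, hα⟩ : ∃ α, x 0 α ≠ 0 := Function.ne_iff.mp (hx 0)
      have := congrFun hg (i.1, α.succ)
      simp only [hu, Finset.sum_apply, Pi.smul_apply, Fintype.sum_sum_type,
        Sum.elim_inl, Sum.elim_inr, Fin.cases_succ, smul_eq_mul, mul_ite, mul_zero,
        Finset.sum_ite_eq', Finset.sum_ite_eq, Finset.sum_ite_irrel, Finset.sum_const_zero,
        Finset.mem_univ, if_true, Pi.zero_apply, mul_add] at this
      simp only [hgl, zero_mul, if_neg i.2, zero_add, Subtype.coe_inj,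
        Finset.sum_ite_eq, Finset.mem_univ, if_true] at this
      rcases mul_eq_zero.mp this with h | h
      · exact h
      · exact absurd h hα
  have hle : Submodule.span ℝ (Set.range u) ≤ LinearMap.ker M.mulVecLin :=
    Submodule.span_le.mpr (Set.range_subset_iff.mpr hmem)
  have hcard : Fintype.card (Fin N ⊕ {i : Fin N // i ≠ 0}) = 2 * N - 1 := by
    have h1 : Fintype.card {i : Fin N // i ≠ 0} = N - 1 := by
      rw [Fintype.card_subtype_compl, Fintype.card_subtype_eq, Fintype.card_fin]
    rw [Fintype.card_sum, Fintype.card_fin, h1]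
    omega
  have hkle : 2 * N - 1 ≤ Module.finrank ℝ ↥(LinearMap.ker M.mulVecLin) := by
    calc 2 * N - 1 = Fintype.card (Fin N ⊕ {i : Fin N // i ≠ 0}) := hcard.symm
      _ = Module.finrank ℝ ↥(Submodule.span ℝ (Set.range u)) :=
          (finrank_span_eq_card hind).symm
      _ ≤ _ := Submodule.finrank_mono hle
  have hrn := LinearMap.finrank_range_add_finrank_ker M.mulVecLin
  rw [Module.finrank_pi, Fintype.card_prod, Fintype.card_fin, Fintype.card_fin] at hrn
  have hrk : M.rank = Module.finrank ℝ ↥(LinearMap.range M.mulVecLin) := rfl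
  have h2 : 2 * N ≤ N * (d + 1) := by nlinarith
  obtain ⟨T, hT⟩ : ∃ T, N * (d + 1) = T := ⟨_, rfl⟩
  rw [hT] at hrn h2 ⊢
  rw [hrk]
  omega
end

section
/- Let σ: ℝ → ℝ have Hermite expansion with coefficients μ_r(σ), and suppose the N×N kernel Gram matrix K of a one-hidden-layer NTK satisfies λ_min(K) ≥ μ_r(σ)² · (min_i ‖x^{(i)}‖^{2r} − (N−1) max_{i≠j} |⟨x^{(i)}, x^{(j)}⟩|^r) / (max_i ‖x^{(i)}‖^{2(r−1)}) for all r with μ_r(σ) ≠ 0. If infinitely many μ_r(σ) are nonzero, all inputs have unit norm, and no two inputs x^{(i)}, x^{(j)} (i ≠ j) are parallel, then λ_min(K) > 0. -/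
open scoped BigOperators

/-- Suppose the minimum eigenvalue `L` of the `N×N` NTK Gram matrix of a one-hidden-layer
network with activation `σ` (Hermite coefficients `μ r`) satisfies, for every `r` with
`μ r ≠ 0`,
`L ≥ μ_r² · (min_i ‖x⁽ⁱ⁾‖^{2r} − (N−1)·max_{i≠j}|⟨x⁽ⁱ⁾,x⁽ʲ⁾⟩|^r) / (max_i ‖x⁽ⁱ⁾‖^{2(r−1)})`.
If infinitely many `μ r` are nonzero, all inputs have unit norm, and no two distinct inputs
are parallel, then `L > 0`. -/
theorem ntk_min_eigenvalue_pos {N d : ℕ} (hN : 2 ≤ N)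
    (x : Fin N → Fin d → ℝ)
    (hunit : ∀ i, Real.sqrt (∑ k, x i k ^ 2) = 1)
    (hpar : ∀ i j, i ≠ j → |∑ k, x i k * x j k| < 1)
    (μ : ℕ → ℝ) (hμ : ∀ n : ℕ, ∃ r, n ≤ r ∧ μ r ≠ 0)
    (L : ℝ)
    (hL : ∀ r : ℕ, μ r ≠ 0 →
      (μ r) ^ 2 *
          ((⨅ i, Real.sqrt (∑ k, x i k ^ 2) ^ (2 * r))
            - ((N : ℝ) - 1) *
              ⨆ p : {p : Fin N × Fin N // p.1 ≠ p.2},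
                |∑ k, x p.1.1 k * x p.1.2 k| ^ r) /
          (⨆ i, Real.sqrt (∑ k, x i k ^ 2) ^ (2 * (r - 1)))
        ≤ L) :
    0 < L := by
  have hNe : Nonempty (Fin N) := ⟨⟨0, by omega⟩⟩
  have hPe : Nonempty {p : Fin N × Fin N // p.1 ≠ p.2} :=
    ⟨⟨(⟨0, by omega⟩, ⟨1, by omega⟩), by simp [Fin.ext_iff]⟩⟩
  -- the function on pairs
  set f : {p : Fin N × Fin N // p.1 ≠ p.2} → ℝ :=
    fun p => |∑ k, x p.1.1 k * x p.1.2 k| with hf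
  obtain ⟨p0, hp0⟩ := Finite.exists_max f
  set M : ℝ := f p0 with hM
  have hM0 : 0 ≤ M := abs_nonneg _
  have hM1 : M < 1 := hpar _ _ p0.2
  have hN1 : (1 : ℝ) ≤ (N : ℝ) - 1 := by
    have : (2 : ℝ) ≤ (N : ℝ) := by exact_mod_cast hN
    linarith
  have hN1pos : (0 : ℝ) < (N : ℝ) - 1 := by linarith
  obtain ⟨n, hn⟩ := exists_pow_lt_of_lt_one (by positivity : (0:ℝ) < ((N:ℝ)-1)⁻¹) hM1
  obtain ⟨r, hnr, hμr⟩ := hμ n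
  have hMr : M ^ r < ((N:ℝ)-1)⁻¹ :=
    lt_of_le_of_lt (pow_le_pow_of_le_one hM0 hM1.le hnr) hn
  have hsup : (⨆ p : {p : Fin N × Fin N // p.1 ≠ p.2},
      |∑ k, x p.1.1 k * x p.1.2 k| ^ r) ≤ M ^ r := by
    apply ciSup_le
    intro p
    exact pow_le_pow_left₀ (abs_nonneg _) (hp0 p) r
  have key := hL r hμr
  have h1 : (⨅ i, Real.sqrt (∑ k, x i k ^ 2) ^ (2 * r)) = 1 := by
    simp [hunit]
  have h2 : (⨆ i, Real.sqrt (∑ k, x i k ^ 2) ^ (2 * (r - 1))) = 1 := by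
    simp [hunit]
  rw [h1, h2, div_one] at key
  refine lt_of_lt_of_le ?_ key
  have hμ2 : 0 < (μ r) ^ 2 := pow_pos (abs_pos.mpr hμr) 2 |>.trans_le (le_of_eq (sq_abs _))
  have hpos : 0 < 1 - ((N : ℝ) - 1) *
      ⨆ p : {p : Fin N × Fin N // p.1 ≠ p.2}, |∑ k, x p.1.1 k * x p.1.2 k| ^ r := by
    have : ((N : ℝ) - 1) * (⨆ p : {p : Fin N × Fin N // p.1 ≠ p.2},
        |∑ k, x p.1.1 k * x p.1.2 k| ^ r) ≤ ((N:ℝ)-1) * M ^ r :=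
      mul_le_mul_of_nonneg_left hsup hN1pos.le
    have h2 : ((N:ℝ)-1) * M ^ r < 1 := by
      have := mul_lt_mul_of_pos_left hMr hN1pos
      rwa [mul_inv_cancel₀ hN1pos.ne'] at this
    linarith
  positivity
end

section
/- Let φ: ℝ → ℝ be M₁-Lipschitz with φ(0) finite, and let Z ~ N(0,1). For v ∈ ℝ with 1/2 ≤ |v| ≤ 3/2, |E[φ(vZ)²] − E[φ(Z)²]| ≤ M₁(2|φ(0)| + M₁·5/√(2π)) · |v² − 1|. -/
/-!
Factor `φ(vz)² - φ(z)² = (φ(vz) - φ(z)) (φ(vz) + φ(z))`: the Lipschitz bound gives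
`|φ(vz) - φ(z)| ≤ M |v - 1| |z|` and `|φ(vz) + φ(z)| ≤ 2 |φ 0| + M (|v| + 1) |z|`, so after
integrating against `N(0,1)` only `E|Z| ≤ 1` and `E Z² = 1` are needed. Since `N(0,1)` is
symmetric one may replace `v` by `|v|`, for which `|v - 1| (v + 1) = |v² - 1|`; finally
`√(2π) ≤ 5` absorbs the constant.
-/

open MeasureTheory ProbabilityTheory

theorem LipschitzWith.comp_memLp_of_isFiniteMeasure {α E F : Type*} [MeasurableSpace α]
    {μ : Measure α} [IsFiniteMeasure μ] [NormedAddCommGroup E] [NormedAddCommGroup F]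
    {K : NNReal} {p : ENNReal} {f : α → E} {g : E → F} (hg : LipschitzWith K g)
    (hf : MemLp f p μ) : MemLp (g ∘ f) p μ := by
  have h := ((hg.sub (LipschitzWith.const (g 0))).comp_memLp (sub_self _) hf).add
    (memLp_const (g 0))
  convert h using 1
  ext x
  simp

lemma lipschitzWith_of_abs_sub_le {M : ℝ} {φ : ℝ → ℝ} (hφ : ∀ s t, |φ s - φ t| ≤ M * |s - t|) :
    LipschitzWith M.toNNReal φ :=
  LipschitzWith.of_dist_le_mul fun s t =>
    (hφ s t).trans (mul_le_mul_of_nonneg_right (Real.le_coe_toNNReal M) (abs_nonneg _))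

lemma abs_sq_sub_sq_le_of_abs_sub_le {M : ℝ} {φ : ℝ → ℝ}
    (hφ : ∀ s t, |φ s - φ t| ≤ M * |s - t|) (a b : ℝ) :
    |φ a ^ 2 - φ b ^ 2| ≤ M * |a - b| * (2 * |φ 0| + M * (|a| + |b|)) := by
  have hdiff := hφ a b
  have hsum : |φ a + φ b| ≤ 2 * |φ 0| + M * (|a| + |b|) := by
    have ha : |φ a - φ 0| ≤ M * |a| := by simpa using hφ a 0
    have hb : |φ b - φ 0| ≤ M * |b| := by simpa using hφ b 0
    calc |φ a + φ b| = |(φ a - φ 0) + (φ b - φ 0) + 2 * φ 0| := by ring_nf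
      _ ≤ |φ a - φ 0| + |φ b - φ 0| + |2 * φ 0| := abs_add_three _ _ _
      _ ≤ 2 * |φ 0| + M * (|a| + |b|) := by rw [abs_mul, abs_two]; linarith
  calc |φ a ^ 2 - φ b ^ 2| = |φ a - φ b| * |φ a + φ b| := by rw [← abs_mul]; ring_nf
    _ ≤ _ := mul_le_mul hdiff hsum (abs_nonneg _) ((abs_nonneg _).trans hdiff)

theorem abs_integral_sq_comp_mul_sub_le {μ : Measure ℝ} [IsFiniteMeasure μ] (hμ : MemLp id 2 μ)
    {M : ℝ} {φ : ℝ → ℝ} (hφ : ∀ s t, |φ s - φ t| ≤ M * |s - t|) (w : ℝ) :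
    |(∫ z, φ (w * z) ^ 2 ∂μ) - ∫ z, φ z ^ 2 ∂μ|
      ≤ M * |w - 1| * (2 * |φ 0| * ∫ z, |z| ∂μ + M * (|w| + 1) * ∫ z, z ^ 2 ∂μ) := by
  have hL := lipschitzWith_of_abs_sub_le hφ
  have hint : ∀ c : ℝ, Integrable (fun z => φ (c * z) ^ 2) μ := fun c =>
    (hL.comp_memLp_of_isFiniteMeasure (hμ.const_mul c)).integrable_sq
  have hint_abs : Integrable (fun z : ℝ => |z|) μ := (hμ.integrable one_le_two).abs
  have hint_sq : Integrable (fun z : ℝ => z ^ 2) μ := hμ.integrable_sq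
  set A := M * |w - 1| * (2 * |φ 0|)
  set B := M * |w - 1| * (M * (|w| + 1))
  have hpoint : ∀ z, |φ (w * z) ^ 2 - φ z ^ 2| ≤ A * |z| + B * z ^ 2 := fun z => by
    have h := abs_sq_sub_sq_le_of_abs_sub_le hφ (w * z) z
    rw [← sub_one_mul, abs_mul, abs_mul] at h
    refine h.trans (le_of_eq ?_)
    rw [← sq_abs z]
    ring
  calc |(∫ z, φ (w * z) ^ 2 ∂μ) - ∫ z, φ z ^ 2 ∂μ|
      = |∫ z, (φ (w * z) ^ 2 - φ z ^ 2) ∂μ| := by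
        rw [integral_sub (hint w) (by simpa using hint 1)]
    _ ≤ ∫ z, |φ (w * z) ^ 2 - φ z ^ 2| ∂μ := abs_integral_le_integral_abs
    _ ≤ ∫ z, (A * |z| + B * z ^ 2) ∂μ :=
        integral_mono ((hint w).sub (by simpa using hint 1)).abs
          ((hint_abs.const_mul A).add (hint_sq.const_mul B)) hpoint
    _ = _ := by
        rw [integral_add (hint_abs.const_mul A) (hint_sq.const_mul B), integral_const_mul,
          integral_const_mul]
        ring

lemma sq_integral_abs_le_integral_sq {Ω : Type*} [MeasurableSpace Ω] {μ : Measure Ω}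
    [IsProbabilityMeasure μ] {X : Ω → ℝ} (hX : MemLp X 2 μ) :
    (∫ ω, |X ω| ∂μ) ^ 2 ≤ ∫ ω, X ω ^ 2 ∂μ := by
  have h := variance_eq_sub hX.abs
  have := variance_nonneg |X| μ
  simp only [Pi.pow_apply, Pi.abs_apply, sq_abs] at h
  linarith

lemma integral_sq_gaussianReal (m : ℝ) (v : NNReal) :
    ∫ x, x ^ 2 ∂gaussianReal m v = m ^ 2 + v := by
  have h := variance_eq_sub (memLp_id_gaussianReal (μ := m) (v := v) 2)
  simp only [variance_id_gaussianReal, Pi.pow_apply, id, integral_id_gaussianReal] at h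
  linarith

lemma integral_abs_gaussianReal_le_one : ∫ x, |x| ∂gaussianReal 0 1 ≤ 1 := by
  have h := sq_integral_abs_le_integral_sq (memLp_id_gaussianReal (μ := 0) (v := 1) 2)
  simp only [id, integral_sq_gaussianReal] at h
  exact (pow_le_one_iff_of_nonneg (integral_nonneg fun _ => abs_nonneg _) two_ne_zero).mp
    (by simpa using h)

lemma integral_comp_neg_gaussianReal {E : Type*} [NormedAddCommGroup E] [NormedSpace ℝ E]
    (v : NNReal) (g : ℝ → E) : ∫ x, g (-x) ∂gaussianReal 0 v = ∫ x, g x ∂gaussianReal 0 v := by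
  conv_rhs => rw [← neg_zero, ← gaussianReal_map_neg]
  exact (integral_map_equiv (MeasurableEquiv.neg ℝ) g).symm

lemma integral_comp_abs_mul_gaussianReal {E : Type*} [NormedAddCommGroup E] [NormedSpace ℝ E]
    (v : NNReal) (g : ℝ → E) (c : ℝ) :
    ∫ x, g (|c| * x) ∂gaussianReal 0 v = ∫ x, g (c * x) ∂gaussianReal 0 v := by
  rcases abs_choice c with h | h
  · rw [h]
  · rw [h, ← integral_comp_neg_gaussianReal]
    simp only [neg_mul_neg]

lemma sqrt_two_mul_pi_le_five : Real.sqrt (2 * Real.pi) ≤ 5 := by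
  rw [Real.sqrt_le_left (by norm_num)]
  linarith [Real.pi_le_four]

theorem gaussian_square_moment_local_lipschitz_general (M₁ : ℝ) (φ : ℝ → ℝ)
    (hφ : ∀ s t : ℝ, |φ s - φ t| ≤ M₁ * |s - t|)
    (v : ℝ) :
    |(∫ z, φ (v * z) ^ 2 ∂gaussianReal 0 1) - ∫ z, φ z ^ 2 ∂gaussianReal 0 1|
      ≤ M₁ * (2 * |φ 0| + M₁ * 5 / Real.sqrt (2 * Real.pi)) * |v ^ 2 - 1| := by
  have hM : 0 ≤ M₁ := (abs_nonneg _).trans (by simpa using hφ 1 0)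
  have hv : |v ^ 2 - 1| = |(|v| - 1)| * (|v| + 1) := by
    rw [← sq_abs v, ← abs_of_nonneg (by positivity : 0 ≤ |v| + 1), ← abs_mul]
    ring_nf
  have habs : 2 * |φ 0| * ∫ z, |z| ∂gaussianReal 0 1 ≤ 2 * |φ 0| * (|v| + 1) :=
    mul_le_mul_of_nonneg_left (integral_abs_gaussianReal_le_one.trans (by simp)) (by positivity)
  have hsq : M₁ * (|v| + 1) * ∫ z, z ^ 2 ∂gaussianReal 0 1
      ≤ M₁ * 5 / Real.sqrt (2 * Real.pi) * (|v| + 1) := by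
    have hM5 : M₁ ≤ M₁ * 5 / Real.sqrt (2 * Real.pi) := by
      rw [le_div_iff₀ (by positivity)]
      exact mul_le_mul_of_nonneg_left sqrt_two_mul_pi_le_five hM
    simpa [integral_sq_gaussianReal] using mul_le_mul_of_nonneg_right hM5 (by positivity)
  rw [← integral_comp_abs_mul_gaussianReal 1 (fun x => φ x ^ 2) v]
  refine (abs_integral_sq_comp_mul_sub_le (memLp_id_gaussianReal 2) hφ |v|).trans ?_
  rw [abs_abs, hv]
  calc _ ≤ M₁ * |(|v| - 1)|
          * (2 * |φ 0| * (|v| + 1) + M₁ * 5 / Real.sqrt (2 * Real.pi) * (|v| + 1)) :=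
        mul_le_mul_of_nonneg_left (add_le_add habs hsq) (by positivity)
    _ = _ := by ring

/-- Let `φ : ℝ → ℝ` be `M₁`-Lipschitz and `Z ~ N(0,1)`.  For `v ∈ ℝ` with
`1/2 ≤ |v| ≤ 3/2`,
`|E[φ(vZ)²] − E[φ(Z)²]| ≤ M₁(2|φ(0)| + M₁·5/√(2π)) · |v² − 1|`. -/
theorem gaussian_square_moment_local_lipschitz (M₁ : ℝ) (φ : ℝ → ℝ)
    (hφ : ∀ s t : ℝ, |φ s - φ t| ≤ M₁ * |s - t|)
    (v : ℝ) (hv1 : 1 / 2 ≤ |v|) (hv2 : |v| ≤ 3 / 2) :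
    |(∫ z, φ (v * z) ^ 2 ∂gaussianReal 0 1) - ∫ z, φ z ^ 2 ∂gaussianReal 0 1|
      ≤ M₁ * (2 * |φ 0| + M₁ * 5 / Real.sqrt (2 * Real.pi)) * |v ^ 2 - 1| :=
  gaussian_square_moment_local_lipschitz_general M₁ φ hφ v
end
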